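/- Let r ≥ 2 and s with r ≡ −1 (mod s), i.e. r = r′s + s − 1 for some r′ ≥ 0. For m ∈ {1,...,r−1} write m = m′s + m″ with m″ ∈ {0,...,s−1}, and set ℓ(m) = r − m′ − (r′+1)m″. Then Σ_{m=1}^{r−1} m(r−m)(r − 1 − 2ℓ(m)) = −r(r²−1)/6. -/
import Mathlib
open Finset

lemma sum_id_q (n : ℕ) : ∑ m ∈ Finset.range n, (m:ℚ) = n*(n-1)/2 := by
  induction n with
  | zero => simp
  | succ k ih => rw [Finset.sum_range_succ, ih]; push_cast; ring

lemma sum_sq_q (n : ℕ) : ∑ m ∈ Finset.range n, (m:ℚ)^2 = n*(n-1)*(2*n-1)/6 := by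
  induction n with
  | zero => simp
  | succ k ih => rw [Finset.sum_range_succ, ih]; push_cast; ring

theorem cubic_sum_case_minus (r s r' : ℕ) (hr : 2 ≤ r) (hs : 1 ≤ s)
    (hrs : r = r' * s + s - 1) :
    ∑ m ∈ Finset.Icc 1 (r - 1),
        (m : ℚ) * ((r : ℚ) - m) *
          ((r : ℚ) - 1 - 2 * ((r : ℚ) - (((m / s : ℕ)) : ℚ)
            - ((r' : ℚ) + 1) * (((m % s : ℕ)) : ℚ))) =
      -(r : ℚ) * ((r : ℚ) ^ 2 - 1) / 6 := by
  set f : ℕ → ℚ := fun m => (m : ℚ) * ((r : ℚ) - m) *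
          ((r : ℚ) - 1 - 2 * ((r : ℚ) - (((m / s : ℕ)) : ℚ)
            - ((r' : ℚ) + 1) * (((m % s : ℕ)) : ℚ))) with hf
  -- key facts about the division of r - m
  have key : ∀ m ∈ Finset.Icc 1 (r-1), (r - m) / s = r' - m / s ∧ (r - m) % s = s - 1 - m % s
      ∧ m / s ≤ r' ∧ m % s ≤ s - 1 := by
    intro m hm
    simp only [Finset.mem_Icc] at hm
    have hms : m % s < s := Nat.mod_lt _ hs
    have hdm : m / s * s + m % s = m := Nat.div_add_mod' m s
    have ha : m / s ≤ r' := by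
      by_contra h
      push_neg at h
      have : (r' + 1) * s ≤ m / s * s := Nat.mul_le_mul_right _ h
      have h2 : (r'+1)*s = r'*s + s := by ring
      omega
    -- r - m = (r' - m/s) * s + (s - 1 - m%s)
    have hsub : (r' - m / s) * s = r' * s - m / s * s := Nat.sub_mul _ _ _
    have heq : r - m = (r' - m / s) * s + (s - 1 - m % s) := by
      have h3 : m / s * s ≤ r' * s := Nat.mul_le_mul_right _ ha
      omega
    refine ⟨?_, ?_, ha, by omega⟩
    · rw [heq, add_comm, Nat.add_mul_div_right _ _ hs, Nat.div_eq_of_lt (by omega), Nat.zero_add]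
    · rw [heq, add_comm, Nat.add_mul_mod_self_right, Nat.mod_eq_of_lt (by omega)]
  -- reflection
  have hmem : ∀ m ∈ Finset.Icc 1 (r-1), r - m ∈ Finset.Icc 1 (r-1) := by
    intro m hm; simp only [Finset.mem_Icc] at *; omega
  have hrefl : ∑ m ∈ Finset.Icc 1 (r-1), f m = ∑ m ∈ Finset.Icc 1 (r-1), f (r - m) := by
    apply Finset.sum_nbij' (i := fun m => r - m) (j := fun m => r - m) hmem hmem
    · intro m hm; simp only [Finset.mem_Icc] at hm; omega
    · intro m hm; simp only [Finset.mem_Icc] at hm; omega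
    · intro m hm
      have h : r - (r - m) = m := by simp only [Finset.mem_Icc] at hm; omega
      rw [h]
  have pair : ∀ m ∈ Finset.Icc 1 (r-1), f m + f (r - m) = -2 * (m:ℚ) * ((r:ℚ) - m) := by
    intro m hm
    obtain ⟨h1, h2, h3, h4⟩ := key m hm
    simp only [Finset.mem_Icc] at hm
    have hcast1 : ((r - m : ℕ) : ℚ) = (r:ℚ) - m := by push_cast [Nat.cast_sub (by omega : m ≤ r)]; ring
    have hcast2 : (((r - m) / s : ℕ) : ℚ) = (r':ℚ) - ((m/s : ℕ):ℚ) := by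
      rw [h1]; push_cast [Nat.cast_sub h3]; ring
    have hcast3 : (((r - m) % s : ℕ) : ℚ) = (s:ℚ) - 1 - ((m%s : ℕ):ℚ) := by
      rw [h2]
      have : ((s - 1 - m % s : ℕ) : ℚ) = ((s:ℚ) - 1) - ((m % s : ℕ):ℚ) := by
        have h5 : m % s ≤ s - 1 := h4
        push_cast [Nat.cast_sub h5, Nat.cast_sub hs]
        ring
      rw [this]
    have hrq : (r : ℚ) = (r':ℚ) * s + s - 1 := by
      have : (r : ℕ) + 1 = r' * s + s := by omega
      have h : (r:ℚ) + 1 = (r':ℚ) * s + s := by exact_mod_cast this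
      linarith
    simp only [hf, hcast1, hcast2, hcast3]
    rw [hrq]
    ring
  have two_sum : 2 * (∑ m ∈ Finset.Icc 1 (r-1), f m)
      = ∑ m ∈ Finset.Icc 1 (r-1), (-2 * (m:ℚ) * ((r:ℚ) - m)) := by
    rw [two_mul]
    nth_rewrite 2 [hrefl]
    rw [← Finset.sum_add_distrib]
    exact Finset.sum_congr rfl pair
  have hico : Finset.Icc 1 (r-1) = Finset.Ico 1 r := by
    rw [← Finset.Ico_add_one_right_eq_Icc]; congr 1; omega
  have sum_mr : ∑ m ∈ Finset.Icc 1 (r-1), ((m:ℚ) * ((r:ℚ) - m)) = (r:ℚ) * ((r:ℚ)^2 - 1) / 6 := by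
    have h0 : ∑ m ∈ Finset.range r, ((m:ℚ) * ((r:ℚ) - m)) = ∑ m ∈ Finset.Icc 1 (r-1), ((m:ℚ) * ((r:ℚ) - m)) := by
      rw [hico, Finset.range_eq_Ico, ← Finset.sum_Ico_consecutive _ (Nat.zero_le 1) (by omega : 1 ≤ r)]
      simp
    rw [← h0]
    have : ∑ m ∈ Finset.range r, ((m:ℚ) * ((r:ℚ) - m))
        = (r:ℚ) * (∑ m ∈ Finset.range r, (m:ℚ)) - ∑ m ∈ Finset.range r, (m:ℚ)^2 := by
      rw [Finset.mul_sum, ← Finset.sum_sub_distrib]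
      exact Finset.sum_congr rfl (fun m _ => by ring)
    rw [this, sum_id_q, sum_sq_q]
    have hr1 : ((r:ℚ)) ≥ 2 := by exact_mod_cast hr
    ring
  have : 2 * (∑ m ∈ Finset.Icc 1 (r-1), f m) = -2 * ((r:ℚ) * ((r:ℚ)^2 - 1) / 6) := by
    rw [two_sum, ← sum_mr, Finset.mul_sum]
    exact Finset.sum_congr rfl (fun m _ => by ring)
  linarith [this]
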